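/- Let L ≥ 4 be an integer, μ a real-valued function on the nonempty proper subsets of {1,…,L}, 𝒮 ⊂ {1,…,L} a subset with |𝒮| = S, and K an integer with 2 ≤ K ≤ S ≤ L−2. Then Σ_{i∈𝒮} Σ_{𝒦 : |𝒦| = K} J_i(𝒦) ≥ Σ_{𝒦 ⊆ 𝒮, |𝒦| = K} μ(𝒦) + ((K−1)/(L−1))·η(L,S,K), where η(L,S,K) = (α(L,S,K) + β(L,S,K)/(K−1))·μ̲_K − α(L,S,K)·μ̄_K, and the inner sums over 𝒦 range over subsets of {1,…,L} of cardinality K. -/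

import Mathlib

open Finset
set_option maxHeartbeats 1000000

/-- The contribution `J_i(𝒦)` from atom `a(𝒦)` to rate `r_i`. -/
noncomputable def J (L : ℕ) (μ : Finset (Fin L) → ℝ) (i : Fin L) (𝒦 : Finset (Fin L)) : ℝ :=
  if i ∈ 𝒦 then ((L : ℝ) - 𝒦.card) / ((L : ℝ) - 1) * μ 𝒦
  else -(((𝒦.card : ℝ) - 1) / ((L : ℝ) - 1)) * μ 𝒦

/-- The largest measure `μ̄_K` among atoms of weight `K`. -/
noncomputable def muMax (L : ℕ) (μ : Finset (Fin L) → ℝ) (K : ℕ) : ℝ :=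
  sSup {x : ℝ | ∃ 𝒦 : Finset (Fin L), 𝒦.card = K ∧ μ 𝒦 = x}

/-- The smallest measure `μ̲_K` among atoms of weight `K`. -/
noncomputable def muMin (L : ℕ) (μ : Finset (Fin L) → ℝ) (K : ℕ) : ℝ :=
  sInf {x : ℝ | ∃ 𝒦 : Finset (Fin L), 𝒦.card = K ∧ μ 𝒦 = x}

/-- `α(L,S,K) = S·C(L−1,K) − (S−K)·C(S,K)`. -/
def alphaC (L S K : ℕ) : ℤ :=
  (S : ℤ) * ((L - 1).choose K : ℤ) - ((S : ℤ) - (K : ℤ)) * (S.choose K : ℤ)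

/-- `β(L,S,K) = S·C(L−1,K) − (L−1)·C(S,K)`. -/
def betaC (L S K : ℕ) : ℤ :=
  (S : ℤ) * ((L - 1).choose K : ℤ) - ((L : ℤ) - 1) * (S.choose K : ℤ)

/-- The almost balanced conditional mutual information (ABCMI) condition. -/
noncomputable def ABCMI (L : ℕ) (μ : Finset (Fin L) → ℝ) : Prop :=
  muMax L μ (L - 1) ≤ muMin L μ (L - 1) * (1 + 1 / ((L : ℝ) - 2)) ∧
  ∀ K : ℕ, 2 ≤ K → K ≤ L - 2 →
    muMax L μ K ≤ muMin L μ K * (1 + (1 / ((K : ℝ) - 1)) *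
      sInf {x : ℝ | ∃ S : ℕ, K ≤ S ∧ S ≤ L - 2 ∧
        x = (betaC L S K : ℝ) / (alphaC L S K : ℝ)})

/-- `η(L,S,K) = (α + β/(K−1))·μ̲_K − α·μ̄_K`. -/
noncomputable def eta (L S K : ℕ) (μ : Finset (Fin L) → ℝ) : ℝ :=
  ((alphaC L S K : ℝ) + (betaC L S K : ℝ) / ((K : ℝ) - 1)) * muMin L μ K
    - (alphaC L S K : ℝ) * muMax L μ K

lemma count_contains (L K : ℕ) (hK1 : 1 ≤ K) (i : Fin L) :
    ((Finset.univ.filter (fun 𝒦 : Finset (Fin L) => 𝒦.card = K)).filter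
        (fun 𝒦 => i ∈ 𝒦)).card = (L-1).choose (K-1) := by
  have h := Finset.card_powersetCard (K-1) ((Finset.univ : Finset (Fin L)).erase i)
  rw [Finset.card_erase_of_mem (Finset.mem_univ i), Finset.card_univ, Fintype.card_fin] at h
  rw [← h]
  apply Finset.card_bij (fun 𝒦 _ => 𝒦.erase i)
  · intro 𝒦 h𝒦
    simp only [Finset.mem_filter, Finset.mem_univ, true_and] at h𝒦
    rw [Finset.mem_powersetCard]
    refine ⟨fun x hx => ?_, ?_⟩
    · rw [Finset.mem_erase] at hx
      exact Finset.mem_erase.mpr ⟨hx.1, Finset.mem_univ x⟩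
    · rw [Finset.card_erase_of_mem h𝒦.2, h𝒦.1]
  · intro a ha b hb hab
    simp only [Finset.mem_filter, Finset.mem_univ, true_and] at ha hb
    rw [← Finset.insert_erase ha.2, ← Finset.insert_erase hb.2, hab]
  · intro A hA
    rw [Finset.mem_powersetCard] at hA
    have hiA : i ∉ A := fun h => by simpa using hA.1 h
    refine ⟨insert i A, ?_, ?_⟩
    · simp only [Finset.mem_filter, Finset.mem_univ, true_and]
      rw [Finset.card_insert_of_notMem hiA, hA.2]
      exact ⟨by omega, Finset.mem_insert_self i A⟩
    · rw [Finset.erase_insert hiA]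

lemma sum_inter_card (L K : ℕ) (hK1 : 1 ≤ K) (𝒮 : Finset (Fin L)) :
    ∑ 𝒦 ∈ Finset.univ.filter (fun 𝒦 : Finset (Fin L) => 𝒦.card = K), (𝒮 ∩ 𝒦).card
      = 𝒮.card * (L-1).choose (K-1) := by
  classical
  have h1 : ∀ 𝒦 : Finset (Fin L), (𝒮 ∩ 𝒦).card = ∑ i ∈ 𝒮, if i ∈ 𝒦 then 1 else 0 := by
    intro 𝒦
    rw [← Finset.sum_filter, Finset.filter_mem_eq_inter]
    simp
  simp_rw [h1]
  rw [Finset.sum_comm]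
  have h2 : ∀ i : Fin L,
      ∑ 𝒦 ∈ Finset.univ.filter (fun 𝒦 : Finset (Fin L) => 𝒦.card = K),
        (if i ∈ 𝒦 then 1 else 0) = (L-1).choose (K-1) := by
    intro i
    rw [← Finset.sum_filter]
    simp only [Finset.sum_const, smul_eq_mul, mul_one]
    exact count_contains L K hK1 i
  rw [Finset.sum_congr rfl (fun i _ => h2 i), Finset.sum_const, smul_eq_mul]

lemma binom1 (L K : ℕ) (hK1 : 1 ≤ K) (hKL : K ≤ L) :
    (L-1) * (L-1).choose (K-1) = (K-1) * L.choose K + (L-1).choose K := by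
  obtain ⟨n, rfl⟩ : ∃ n, L = n + 1 := ⟨L - 1, by omega⟩
  obtain ⟨k, rfl⟩ : ∃ k, K = k + 1 := ⟨K - 1, by omega⟩
  simp only [Nat.add_sub_cancel]
  have h1 : (n+1).choose (k+1) = n.choose k + n.choose (k+1) := Nat.choose_succ_succ n k
  have h2 : n.choose (k+1) * (k+1) = n.choose k * (n - k) := Nat.choose_succ_right_eq n k
  have hkn : k ≤ n := by omega
  nlinarith [h1, h2, Nat.sub_add_cancel hkn]

lemma binom2 (L K : ℕ) (hK1 : 1 ≤ K) (hKL : K ≤ L) :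
    L.choose K = (L-1).choose (K-1) + (L-1).choose K := by
  obtain ⟨n, rfl⟩ : ∃ n, L = n + 1 := ⟨L - 1, by omega⟩
  obtain ⟨k, rfl⟩ : ∃ k, K = k + 1 := ⟨K - 1, by omega⟩
  simp [Nat.choose_succ_succ]

theorem stmt8 (L : ℕ) (hL : 4 ≤ L) (μ : Finset (Fin L) → ℝ)
    (S K : ℕ) (𝒮 : Finset (Fin L)) (h𝒮 : 𝒮.card = S)
    (hK : 2 ≤ K) (hKS : K ≤ S) (hSL : S ≤ L - 2) :
    ∑ 𝒦 ∈ Finset.powersetCard K 𝒮, μ 𝒦 + (((K : ℝ) - 1) / ((L : ℝ) - 1)) * eta L S K μ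
      ≤ ∑ i ∈ 𝒮, ∑ 𝒦 ∈ Finset.univ.filter (fun 𝒦 : Finset (Fin L) => 𝒦.card = K),
          J L μ i 𝒦 := by
  classical
  have hKL : K ≤ L := by omega
  have hLr : (4:ℝ) ≤ (L:ℝ) := by exact_mod_cast hL
  have hKr : (2:ℝ) ≤ (K:ℝ) := by exact_mod_cast hK
  have hSr : (S:ℝ) ≤ (L:ℝ) - 2 := by
    have : (S:ℝ) ≤ ((L - 2 : ℕ) : ℝ) := by exact_mod_cast hSL
    have h2 : ((L - 2 : ℕ) : ℝ) = (L:ℝ) - 2 := by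
      have : (2:ℕ) ≤ L := by omega
      push_cast [Nat.cast_sub this]
      ring
    linarith [this, h2.le, h2.ge]
  have hKSr : (K:ℝ) ≤ (S:ℝ) := by exact_mod_cast hKS
  set L1 : ℝ := (L:ℝ) - 1 with hL1def
  have hL1pos : 0 < L1 := by rw [hL1def]; linarith
  set m := muMin L μ K with hm
  set M := muMax L μ K with hM
  -- bounds on μ over K-subsets
  have hsetfin : {x : ℝ | ∃ 𝒦 : Finset (Fin L), 𝒦.card = K ∧ μ 𝒦 = x}.Finite := by
    have h : {x : ℝ | ∃ 𝒦 : Finset (Fin L), 𝒦.card = K ∧ μ 𝒦 = x}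
        = μ '' {𝒦 : Finset (Fin L) | 𝒦.card = K} := by
      ext x
      simp only [Set.mem_setOf_eq, Set.mem_image]
    rw [h]
    exact (Set.toFinite _).image μ
  have hmem : ∀ 𝒦 : Finset (Fin L), 𝒦.card = K →
      μ 𝒦 ∈ {x : ℝ | ∃ 𝒦 : Finset (Fin L), 𝒦.card = K ∧ μ 𝒦 = x} :=
    fun 𝒦 h => ⟨𝒦, h, rfl⟩
  have hmle : ∀ 𝒦 : Finset (Fin L), 𝒦.card = K → m ≤ μ 𝒦 :=
    fun 𝒦 h => csInf_le hsetfin.bddBelow (hmem 𝒦 h)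
  have hleM : ∀ 𝒦 : Finset (Fin L), 𝒦.card = K → μ 𝒦 ≤ M :=
    fun 𝒦 h => le_csSup hsetfin.bddAbove (hmem 𝒦 h)
  have hmM : m ≤ M := by
    obtain ⟨𝒦₀, -, h𝒦₀⟩ := Finset.exists_subset_card_eq (s := (Finset.univ : Finset (Fin L))) (n := K)
      (by rw [Finset.card_univ, Fintype.card_fin]; omega)
    exact le_trans (hmle 𝒦₀ h𝒦₀) (hleM 𝒦₀ h𝒦₀)
  set 𝒰 := Finset.univ.filter (fun 𝒦 : Finset (Fin L) => 𝒦.card = K) with h𝒰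
  have hcard𝒰mem : ∀ 𝒦 ∈ 𝒰, 𝒦.card = K := fun 𝒦 h => (Finset.mem_filter.mp h).2
  -- the inner sum
  have hinner : ∀ 𝒦 : Finset (Fin L), 𝒦.card = K →
      ∑ i ∈ 𝒮, J L μ i 𝒦
        = (((𝒮 ∩ 𝒦).card : ℝ) - (S:ℝ)*((K:ℝ)-1)/L1) * μ 𝒦 := by
    intro 𝒦 h𝒦
    have htS : (𝒮 ∩ 𝒦).card ≤ S := h𝒮 ▸ Finset.card_le_card Finset.inter_subset_left
    have hcards : (𝒮.filter (fun i => ¬ i ∈ 𝒦)).card = S - (𝒮 ∩ 𝒦).card := by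
      have h := Finset.card_filter_add_card_filter_not (s := 𝒮) (p := fun i => i ∈ 𝒦)
      rw [Finset.filter_mem_eq_inter] at h
      omega
    simp only [J, h𝒦]
    rw [Finset.sum_ite, Finset.sum_const, Finset.sum_const, Finset.filter_mem_eq_inter, hcards]
    have hcast : ((S - (𝒮 ∩ 𝒦).card : ℕ) : ℝ) = (S:ℝ) - ((𝒮 ∩ 𝒦).card : ℝ) :=
      Nat.cast_sub htS
    rw [nsmul_eq_mul, nsmul_eq_mul, hcast]
    have hL1ne : L1 ≠ 0 := ne_of_gt hL1pos
    rw [hL1def] at hL1ne ⊢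
    field_simp
    ring
  -- per-term lower bound function
  set G : Finset (Fin L) → ℝ := fun 𝒦 =>
    (if 𝒦 ⊆ 𝒮 then μ 𝒦 else 0)
    + (((𝒮 ∩ 𝒦).card : ℝ) - (S:ℝ)*((K:ℝ)-1)/L1 - (if 𝒦 ⊆ 𝒮 then 1 else 0)) * m
    + (if 𝒦 ⊆ 𝒮 then 0 else
        (((K:ℝ)-1) * ((S:ℝ) - ((𝒮 ∩ 𝒦).card:ℝ)) / L1) * (m - M)) with hG
  have hterm : ∀ 𝒦 ∈ 𝒰, G 𝒦 ≤ ∑ i ∈ 𝒮, J L μ i 𝒦 := by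
    intro 𝒦 h𝒦mem
    have h𝒦 := hcard𝒰mem 𝒦 h𝒦mem
    rw [hinner 𝒦 h𝒦]
    have htS : (𝒮 ∩ 𝒦).card ≤ S := h𝒮 ▸ Finset.card_le_card Finset.inter_subset_left
    have hm𝒦 := hmle 𝒦 h𝒦
    have hM𝒦 := hleM 𝒦 h𝒦
    have ht0 : (0:ℝ) ≤ ((𝒮 ∩ 𝒦).card : ℝ) := Nat.cast_nonneg _
    have htSr : ((𝒮 ∩ 𝒦).card : ℝ) ≤ (S:ℝ) := by exact_mod_cast htS
    by_cases hsub : 𝒦 ⊆ 𝒮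
    · have hik : 𝒮 ∩ 𝒦 = 𝒦 := Finset.inter_eq_right.mpr hsub
      have htk : ((𝒮 ∩ 𝒦).card : ℝ) = (K:ℝ) := by rw [hik, h𝒦]
      simp only [hG, if_pos hsub, htk]
      have hfrac : (S:ℝ)*((K:ℝ)-1)/L1 ≤ (K:ℝ)-1 := by
        rw [div_le_iff₀ hL1pos]
        nlinarith
      have hc1 : 0 ≤ (K:ℝ) - (S:ℝ)*((K:ℝ)-1)/L1 - 1 := by linarith
      nlinarith [mul_le_mul_of_nonneg_left hm𝒦 hc1]
    · simp only [hG, if_neg hsub]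
      set t : ℝ := ((𝒮 ∩ 𝒦).card : ℝ)
      set c : ℝ := t - (S:ℝ)*((K:ℝ)-1)/L1 with hc
      set b : ℝ := ((K:ℝ)-1) * ((S:ℝ) - t) / L1 with hb
      have hb0 : 0 ≤ b := by
        apply div_nonneg _ hL1pos.le
        nlinarith
      have hcb : 0 ≤ c + b := by
        have h1 : c + b = t * ((L:ℝ) - (K:ℝ)) / L1 := by
          rw [hc, hb, hL1def]
          have hne : (L:ℝ) - 1 ≠ 0 := by linarith
          field_simp
          ring
        rw [h1]
        apply div_nonneg _ hL1pos.le
        nlinarith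
      rcases le_or_gt 0 c with hcpos | hcneg
      · nlinarith [mul_nonneg hcpos (sub_nonneg.mpr hm𝒦), mul_nonneg hb0 (sub_nonneg.mpr hmM)]
      · have h1 : c * (M - m) ≤ c * (μ 𝒦 - m) :=
          mul_le_mul_of_nonpos_left (by linarith) hcneg.le
        nlinarith [mul_nonneg hcb (sub_nonneg.mpr hmM)]
  -- counting facts
  have hfilter : 𝒰.filter (fun 𝒦 => 𝒦 ⊆ 𝒮) = Finset.powersetCard K 𝒮 := by
    ext A
    simp only [h𝒰, Finset.mem_filter, Finset.mem_univ, true_and, Finset.mem_powersetCard]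
    tauto
  have hcardsub : (𝒰.filter (fun 𝒦 => 𝒦 ⊆ 𝒮)).card = S.choose K := by
    rw [hfilter, Finset.card_powersetCard, h𝒮]
  have hcard𝒰 : 𝒰.card = L.choose K := by
    have h : 𝒰 = Finset.powersetCard K Finset.univ := by
      ext A
      simp [h𝒰, Finset.mem_powersetCard]
    rw [h, Finset.card_powersetCard, Finset.card_univ, Fintype.card_fin]
  have hsumt : ∑ 𝒦 ∈ 𝒰, (((𝒮 ∩ 𝒦).card : ℕ) : ℝ) = (S:ℝ) * (((L-1).choose (K-1) : ℕ) : ℝ) := by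
    rw [← Nat.cast_sum]
    rw [sum_inter_card L K (by omega) 𝒮, h𝒮]
    push_cast
    ring
  -- abbreviations for choose values
  set ch1 : ℝ := (((L-1).choose K : ℕ) : ℝ) with hch1
  set ch2 : ℝ := (((L-1).choose (K-1) : ℕ) : ℝ) with hch2
  set ch3 : ℝ := ((L.choose K : ℕ) : ℝ) with hch3
  set ch4 : ℝ := ((S.choose K : ℕ) : ℝ) with hch4
  have e1 : L1 * ch2 = ((K:ℝ)-1) * ch3 + ch1 := by
    have h := binom1 L K (by omega) hKL
    have hc : ((L-1 : ℕ):ℝ) = L1 := by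
      rw [hL1def]
      have : (1:ℕ) ≤ L := by omega
      push_cast [Nat.cast_sub this]
      ring
    have hk : ((K-1 : ℕ):ℝ) = (K:ℝ) - 1 := by
      have : (1:ℕ) ≤ K := by omega
      push_cast [Nat.cast_sub this]
      ring
    have := congrArg (Nat.cast : ℕ → ℝ) h
    push_cast at this
    rw [hch2, hch3, hch1, ← hc, ← hk]
    exact_mod_cast h
  have e2 : ch3 = ch2 + ch1 := by
    have h := binom2 L K (by omega) hKL
    rw [hch2, hch3, hch1]
    exact_mod_cast h
  -- compute the sum of G
  have hA : ∑ 𝒦 ∈ 𝒰, (if 𝒦 ⊆ 𝒮 then μ 𝒦 else 0) = ∑ 𝒦 ∈ Finset.powersetCard K 𝒮, μ 𝒦 := by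
    rw [← Finset.sum_filter, hfilter]
  have hB : ∑ 𝒦 ∈ 𝒰, ((((𝒮 ∩ 𝒦).card : ℕ) : ℝ) - (S:ℝ)*((K:ℝ)-1)/L1
        - (if 𝒦 ⊆ 𝒮 then (1:ℝ) else 0)) * m
      = ((S:ℝ) * ch2 - ch3 * ((S:ℝ)*((K:ℝ)-1)/L1) - ch4) * m := by
    rw [← Finset.sum_mul]
    congr 1
    rw [Finset.sum_sub_distrib, Finset.sum_sub_distrib, Finset.sum_const, hsumt]
    rw [← Finset.sum_filter]
    rw [Finset.sum_const]
    rw [hcardsub, hcard𝒰]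
    simp only [nsmul_eq_mul, mul_one]
    rfl
  have hCinner : ∑ 𝒦 ∈ 𝒰, (if 𝒦 ⊆ 𝒮 then (0:ℝ) else
        (((K:ℝ)-1) * ((S:ℝ) - (((𝒮 ∩ 𝒦).card : ℕ):ℝ)) / L1) * (m - M))
      = (ch3 * (S:ℝ) - (S:ℝ) * ch2 - ch4 * ((S:ℝ) - (K:ℝ))) * (((K:ℝ)-1)/L1*(m-M)) := by
    have hswap : ∀ 𝒦 : Finset (Fin L), (if 𝒦 ⊆ 𝒮 then (0:ℝ) else
          (((K:ℝ)-1) * ((S:ℝ) - (((𝒮 ∩ 𝒦).card : ℕ):ℝ)) / L1) * (m - M))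
        = if ¬ (𝒦 ⊆ 𝒮) then ((S:ℝ) - (((𝒮 ∩ 𝒦).card : ℕ):ℝ)) * (((K:ℝ)-1)/L1*(m-M)) else 0 := by
      intro 𝒦
      by_cases h : 𝒦 ⊆ 𝒮 <;> simp [h] <;> ring
    simp_rw [hswap]
    rw [← Finset.sum_filter, ← Finset.sum_mul]
    congr 1
    have hsplit := Finset.sum_filter_add_sum_filter_not 𝒰 (fun 𝒦 => 𝒦 ⊆ 𝒮)
      (fun 𝒦 => (S:ℝ) - (((𝒮 ∩ 𝒦).card : ℕ):ℝ))
    have htot : ∑ 𝒦 ∈ 𝒰, ((S:ℝ) - (((𝒮 ∩ 𝒦).card : ℕ):ℝ)) = ch3 * (S:ℝ) - (S:ℝ) * ch2 := by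
      rw [Finset.sum_sub_distrib, Finset.sum_const, hsumt, hcard𝒰]
      simp only [nsmul_eq_mul]
      rfl
    have hsubpart : ∑ 𝒦 ∈ 𝒰.filter (fun 𝒦 => 𝒦 ⊆ 𝒮), ((S:ℝ) - (((𝒮 ∩ 𝒦).card : ℕ):ℝ))
        = ch4 * ((S:ℝ) - (K:ℝ)) := by
      have hval : ∀ 𝒦 ∈ 𝒰.filter (fun 𝒦 => 𝒦 ⊆ 𝒮),
          (S:ℝ) - (((𝒮 ∩ 𝒦).card : ℕ):ℝ) = (S:ℝ) - (K:ℝ) := by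
        intro 𝒦 h𝒦'
        rw [Finset.mem_filter] at h𝒦'
        have hik : 𝒮 ∩ 𝒦 = 𝒦 := Finset.inter_eq_right.mpr h𝒦'.2
        rw [hik, hcard𝒰mem 𝒦 h𝒦'.1]
      rw [Finset.sum_congr rfl hval, Finset.sum_const, hcardsub]
      simp only [nsmul_eq_mul]
      rfl
    linarith [hsplit, htot, hsubpart]
  -- cast alpha and beta
  have hKm1ne : ((K:ℝ) - 1) ≠ 0 := by linarith
  have hL1ne : L1 ≠ 0 := ne_of_gt hL1pos
  have hα : (alphaC L S K : ℝ) = (S:ℝ) * ch1 - ((S:ℝ) - (K:ℝ)) * ch4 := by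
    rw [alphaC, hch1, hch4]
    push_cast
    ring
  have hβ : (betaC L S K : ℝ) = (S:ℝ) * ch1 - L1 * ch4 := by
    rw [betaC, hch1, hch4, hL1def]
    push_cast
    ring
  have q1 : (S:ℝ) * ch2 - ch3 * ((S:ℝ)*((K:ℝ)-1)/L1) - ch4 = ((S:ℝ) * ch1 - L1 * ch4)/L1 := by
    field_simp
    linear_combination (S:ℝ) * e1
  have q2 : ch3 * (S:ℝ) - (S:ℝ) * ch2 - ch4 * ((S:ℝ) - (K:ℝ)) = (alphaC L S K : ℝ) := by
    rw [hα]
    linear_combination (S:ℝ) * e2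
  have hsumG : ∑ 𝒦 ∈ 𝒰, G 𝒦
      = ∑ 𝒦 ∈ Finset.powersetCard K 𝒮, μ 𝒦 + (((K:ℝ) - 1) / L1) * eta L S K μ := by
    simp only [hG]
    rw [Finset.sum_add_distrib, Finset.sum_add_distrib, hA, hB, hCinner]
    rw [q1, q2, eta, ← hm, ← hM, hβ]
    field_simp
    ring
  calc ∑ 𝒦 ∈ Finset.powersetCard K 𝒮, μ 𝒦 + (((K:ℝ) - 1) / L1) * eta L S K μ
      = ∑ 𝒦 ∈ 𝒰, G 𝒦 := hsumG.symm
    _ ≤ ∑ 𝒦 ∈ 𝒰, ∑ i ∈ 𝒮, J L μ i 𝒦 := Finset.sum_le_sum hterm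
    _ = ∑ i ∈ 𝒮, ∑ 𝒦 ∈ 𝒰, J L μ i 𝒦 := Finset.sum_comm
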